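/- Let R be a finite ring, P a left multiplicative property on R^n, Γ a set of generators of the nonzero principal left ideals of R, and C a left submodule of R^n such that P(c) holds for all nonzero c ∈ C. For x ∈ R^n, if P(γx + c) holds for all γ ∈ Γ and all c ∈ C, then P(rx + c) holds for all nonzero r ∈ R and all c ∈ C. -/

import Mathlib

open Function LinearMap
open scoped Classical

universe u v

theorem my_fiber_count {α β : Type*} [Finite α] [Fintype β] (g : α → β) :
    Nat.card α = ∑ b : β, Nat.card {a // g a = b} := by
  haveI := Fintype.ofFinite α
  haveI : ∀ b, Fintype {a // g a = b} := fun b => Fintype.ofFinite _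
  rw [Nat.card_eq_fintype_card, ← Fintype.card_congr (Equiv.sigmaFiberEquiv g),
    Fintype.card_sigma]
  exact Finset.sum_congr rfl fun b _ => (Nat.card_eq_fintype_card).symm

section Cancel

variable {S : Type u} [Ring S]

theorem my_finite_linearMap {X Y : Type v} [AddCommGroup X] [Module S X]
    [AddCommGroup Y] [Module S Y] [Finite X] [Finite Y] : Finite (X →ₗ[S] Y) :=
  Finite.of_injective (fun f => (f : X → Y)) DFunLike.coe_injective

variable {B : Type v} [AddCommGroup B] [Module S B] [Finite B]

/-- number of linear maps from X to B with range N -/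
noncomputable def tcount (X : Type v) [AddCommGroup X] [Module S X]
    (N : Submodule S B) : ℕ :=
  Nat.card {f : X →ₗ[S] B // LinearMap.range f = N}

theorem my_master [Fintype (Submodule S B)] {X : Type v} [AddCommGroup X] [Module S X]
    [Finite X] (N : Submodule S B) :
    Nat.card (X →ₗ[S] ↥N) =
      ∑ N' : Submodule S B, (if N' ≤ N then tcount X N' else 0) := by
  haveI := @my_finite_linearMap S _ X B _ _ _ _ _ _
  haveI : Finite {f : X →ₗ[S] B // LinearMap.range f ≤ N} := Subtype.finite
  have e1 : (X →ₗ[S] ↥N) ≃ {f : X →ₗ[S] B // LinearMap.range f ≤ N} :=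
  { toFun := fun g => ⟨N.subtype ∘ₗ g, by
      rintro y ⟨x, rfl⟩
      exact (g x).2⟩
    invFun := fun f => LinearMap.codRestrict N f.1 (fun c => f.2 ⟨c, rfl⟩)
    left_inv := fun g => by ext x; rfl
    right_inv := fun f => by ext x; rfl }
  rw [Nat.card_congr e1, my_fiber_count (fun f : {f : X →ₗ[S] B // LinearMap.range f ≤ N} =>
    LinearMap.range f.1)]
  refine Finset.sum_congr rfl fun N' _ => ?_
  by_cases h : N' ≤ N
  · rw [if_pos h]
    refine Nat.card_congr ⟨fun f => ⟨f.1.1, f.2⟩,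
      fun f => ⟨⟨f.1, by rw [f.2]; exact h⟩, f.2⟩, fun f => rfl, fun f => rfl⟩
  · rw [if_neg h]
    haveI : IsEmpty {a : {f : X →ₗ[S] B // LinearMap.range f ≤ N} //
        LinearMap.range a.1 = N'} := ⟨fun a => h (by rw [← a.2]; exact a.1.2)⟩
    exact Nat.card_of_isEmpty

theorem my_tcount_eq [Fintype (Submodule S B)]
    {A : Type v} [AddCommGroup A] [Module S A] [Finite A]
    {A' : Type v} [AddCommGroup A'] [Module S A'] [Finite A']
    (H : ∀ (N : Submodule S B), Nat.card (A →ₗ[S] ↥N) = Nat.card (A' →ₗ[S] ↥N)) :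
    ∀ N : Submodule S B, tcount A N = tcount A' N := by
  intro N
  induction N using WellFoundedLT.induction with
  | _ N ih =>
    have hmA := my_master (S := S) (B := B) (X := A) N
    have hmA' := my_master (S := S) (B := B) (X := A') N
    rw [H N, hmA'] at hmA
    rw [← Finset.add_sum_erase _ _ (Finset.mem_univ N), if_pos le_rfl,
      ← Finset.add_sum_erase _ (fun N' => if N' ≤ N then tcount A N' else 0)
        (Finset.mem_univ N), if_pos le_rfl] at hmA
    have hsum : ∑ N' ∈ Finset.univ.erase N, (if N' ≤ N then tcount A' N' else 0) =
        ∑ N' ∈ Finset.univ.erase N, (if N' ≤ N then tcount A N' else 0) := by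
      refine Finset.sum_congr rfl fun N' hN' => ?_
      by_cases h : N' ≤ N
      · rw [if_pos h, if_pos h, ih N' (lt_of_le_of_ne h (Finset.ne_of_mem_erase hN'))]
      · rw [if_neg h, if_neg h]
    rw [hsum] at hmA
    exact Nat.add_right_cancel hmA.symm

/-- Cancellation for finite modules. -/
theorem my_cancel {M A A' : Type v} [AddCommGroup M] [Module S M] [Finite M]
    [AddCommGroup A] [Module S A] [Finite A]
    [AddCommGroup A'] [Module S A'] [Finite A']
    (e : (M × A) ≃ₗ[S] (M × A')) : Nonempty (A ≃ₗ[S] A') := by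
  haveI := @my_finite_linearMap S _ A A' _ _ _ _ _ _
  haveI : Fintype (Submodule S A') := Fintype.ofFinite _
  have H : ∀ (X : Type v) [AddCommGroup X] [Module S X] [Finite X],
      Nat.card (A →ₗ[S] X) = Nat.card (A' →ₗ[S] X) := by
    intro X _ _ _
    haveI := @my_finite_linearMap S _ M X _ _ _ _ _ _
    haveI := @my_finite_linearMap S _ A X _ _ _ _ _ _
    haveI := @my_finite_linearMap S _ A' X _ _ _ _ _ _
    haveI := @my_finite_linearMap S _ (M × A) X _ _ _ _ _ _
    haveI := @my_finite_linearMap S _ (M × A') X _ _ _ _ _ _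
    have e2 : ((M × A) →ₗ[S] X) ≃ ((M →ₗ[S] X) × (A →ₗ[S] X)) :=
    { toFun := fun f => (f ∘ₗ LinearMap.inl S M A, f ∘ₗ LinearMap.inr S M A)
      invFun := fun p => p.1.coprod p.2
      left_inv := fun f => by ext x <;> simp
      right_inv := fun p => by refine Prod.ext ?_ ?_ <;> ext x <;> simp }
    have e3 : ((M × A') →ₗ[S] X) ≃ ((M →ₗ[S] X) × (A' →ₗ[S] X)) :=
    { toFun := fun f => (f ∘ₗ LinearMap.inl S M A', f ∘ₗ LinearMap.inr S M A')
      invFun := fun p => p.1.coprod p.2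
      left_inv := fun f => by ext x <;> simp
      right_inv := fun p => by refine Prod.ext ?_ ?_ <;> ext x <;> simp }
    have ecomp : ((M × A') →ₗ[S] X) ≃ ((M × A) →ₗ[S] X) :=
      ⟨fun f => f ∘ₗ (e : (M × A) →ₗ[S] (M × A')),
       fun f => f ∘ₗ (e.symm : (M × A') →ₗ[S] (M × A)),
       fun f => by ext x <;> simp,
       fun f => by ext x <;> simp⟩
    have h1 : Nat.card (M →ₗ[S] X) * Nat.card (A →ₗ[S] X)
        = Nat.card (M →ₗ[S] X) * Nat.card (A' →ₗ[S] X) := by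
      rw [← Nat.card_prod, ← Nat.card_prod, ← Nat.card_congr e2, ← Nat.card_congr e3,
        Nat.card_congr ecomp]
    exact Nat.eq_of_mul_eq_mul_left Nat.card_pos h1
  have ht := @my_tcount_eq S _ A' _ _ _ _ A _ _ _ A' _ _ _ (fun N : Submodule S A' => H ↥N) ⊤
  have hA'pos : 0 < tcount (S := S) (B := A') A' ⊤ := by
    haveI := @my_finite_linearMap S _ A' A' _ _ _ _ _ _
    haveI : Finite {f : A' →ₗ[S] A' // LinearMap.range f = ⊤} := Subtype.finite
    haveI : Nonempty {f : A' →ₗ[S] A' // LinearMap.range f = ⊤} :=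
      ⟨⟨LinearMap.id, LinearMap.range_id⟩⟩
    exact Nat.card_pos
  rw [← ht] at hA'pos
  have hne : Nonempty {f : A →ₗ[S] A' // LinearMap.range f = ⊤} :=
    (Nat.card_pos_iff.mp hA'pos).1
  obtain ⟨f, hf⟩ := hne
  have hsurj : Surjective f := LinearMap.range_eq_top.mp hf
  have hcard : Nat.card A = Nat.card A' := by
    have h2 := Nat.card_congr e.toEquiv
    rw [Nat.card_prod, Nat.card_prod] at h2
    exact Nat.eq_of_mul_eq_mul_left Nat.card_pos h2
  haveI := Fintype.ofFinite A
  haveI := Fintype.ofFinite A'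
  have hbij : Bijective f := by
    rw [Fintype.bijective_iff_surjective_and_card]
    exact ⟨hsurj, by rw [← Nat.card_eq_fintype_card, ← Nat.card_eq_fintype_card, hcard]⟩
  exact ⟨LinearEquiv.ofBijective f hbij⟩

end Cancel


section RingPart

variable {R : Type u} [Ring R]

theorem my_pow_mul_comm (a b : R) (n : ℕ) : (a*b)^n * a = a * (b*a)^n := by
  induction n with
  | zero => simp
  | succ k ih =>
    rw [pow_succ, pow_succ, ← mul_assoc a, ← ih]
    simp [mul_assoc]

theorem my_pow_fix (t γ : R) (h : t * γ = γ) : ∀ n : ℕ, t ^ n * γ = γ := by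
  intro n
  induction n with
  | zero => simp
  | succ k ih => rw [pow_succ, mul_assoc, h, ih]

theorem my_pow_idem [Finite R] (t : R) : ∃ K : ℕ, t ^ (K+1) * t ^ (K+1) = t ^ (K+1) := by
  have h : ¬ Injective (fun k : ℕ => t ^ k) := fun hinj => (Finite.of_injective _ hinj).false
  rw [Injective] at h
  push_neg at h
  obtain ⟨i, j, hij, hne⟩ := h
  wlog hlt : i < j generalizing i j
  · exact this j i hij.symm (Ne.symm hne) (by omega)
  obtain ⟨d, hd1, rfl⟩ : ∃ d, 1 ≤ d ∧ j = i + d := ⟨j - i, by omega, by omega⟩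
  have hstep : ∀ m, i ≤ m → t ^ (m + d) = t ^ m := by
    intro m hm
    obtain ⟨k, rfl⟩ : ∃ k, m = i + k := ⟨m - i, by omega⟩
    have he : i + k + d = (i + d) + k := by ring
    rw [he, pow_add, ← hij, ← pow_add]
  have hsteps : ∀ c m, i ≤ m → t ^ (m + c * d) = t ^ m := by
    intro c
    induction c with
    | zero => intro m _; simp
    | succ n ih =>
      intro m hm
      have he : m + (n+1) * d = (m + n * d) + d := by ring
      rw [he, hstep _ (by omega), ih m hm]
  have hpos : 0 < d * (i+1) := Nat.mul_pos (by omega) (Nat.succ_pos i)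
  refine ⟨d * (i+1) - 1, ?_⟩
  have hN : d * (i+1) - 1 + 1 = d * (i+1) := by omega
  rw [hN, ← pow_add]
  have he : d * (i+1) + d * (i+1) = d * (i+1) + (i+1) * d := by ring
  rw [he, hsteps (i+1) (d * (i+1)) (by nlinarith)]

theorem my_pow_idem_mult (x : R) (K : ℕ) (hx : x ^ (K+1) * x ^ (K+1) = x ^ (K+1)) :
    ∀ m : ℕ, 1 ≤ m → x ^ (m * (K+1)) = x ^ (K+1) := by
  intro m hm
  induction m with
  | zero => omega
  | succ n ih =>
    rcases Nat.eq_or_lt_of_le hm with h | h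
    · rw [← h]; simp
    · have hn : 1 ≤ n := by omega
      have he : (n+1) * (K+1) = n * (K+1) + (K+1) := by ring
      rw [he, pow_add, ih hn, hx]

end RingPart





section Stage2

variable {R : Type u} [Ring R]

/-- left multiplication as an `Rᵐᵒᵖ`-linear endomorphism of `R` -/
def lmulOp (c : R) : R →ₗ[Rᵐᵒᵖ] R where
  toFun x := c * x
  map_add' := mul_add c
  map_smul' m x := by
    simp only [MulOpposite.smul_eq_mul_unop, RingHom.id_apply, mul_assoc]

@[simp] theorem lmulOp_apply (c x : R) : lmulOp c x = c * x := rfl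

/-- splitting of R by an idempotent, as right modules -/
noncomputable def idemSplit (f : R) (hf : f * f = f) :
    R ≃ₗ[Rᵐᵒᵖ] (↥(LinearMap.range (lmulOp f)) × ↥(LinearMap.range (lmulOp (1 - f)))) where
  toFun x := (⟨f * x, ⟨x, rfl⟩⟩, ⟨(1-f) * x, ⟨x, rfl⟩⟩)
  invFun p := p.1.1 + p.2.1
  left_inv x := by simp [sub_mul]
  right_inv p := by
    obtain ⟨⟨m, xm, hm⟩, ⟨a, xa, ha⟩⟩ := p
    simp only [lmulOp_apply] at hm ha
    have h2 : f * (1-f) = 0 := by rw [mul_sub, mul_one, hf, sub_self]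
    have h3 : (1-f) * f = 0 := by rw [sub_mul, one_mul, hf, sub_self]
    have h4 : (1-f) * (1-f) = 1-f := by rw [sub_mul, one_mul, mul_sub, mul_one, hf, sub_self, sub_zero]
    refine Prod.ext (Subtype.ext ?_) (Subtype.ext ?_) <;>
      simp only [← hm, ← ha]
    · rw [mul_add, ← mul_assoc, hf, ← mul_assoc, h2, zero_mul, add_zero]
    · rw [mul_add, ← mul_assoc, ← mul_assoc, h3, zero_mul, zero_add, h4]
  map_add' x y := by
    refine Prod.ext (Subtype.ext ?_) (Subtype.ext ?_) <;> simp [mul_add]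
  map_smul' m x := by
    refine Prod.ext (Subtype.ext ?_) (Subtype.ext ?_) <;>
      simp [MulOpposite.smul_eq_mul_unop, mul_assoc]

theorem my_unit_of_system [Finite R] (e e' x y γ r : R)
    (hee : e*e = e) (he'e' : e'*e' = e') (hxy : x*y = e') (hyx : y*x = e)
    (hxe : x*e = x) (he'x : e'*x = x) (hey : e*y = y) (hye' : y*e' = y)
    (heγ : e*γ = γ) (hxγ : x*γ = r) : ∃ u : Rˣ, (u : R) * γ = r := by
  classical
  have hff : (1-e) * (1-e) = 1-e := by
    rw [sub_mul, one_mul, mul_sub, mul_one, hee, sub_self, sub_zero]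
  have hff' : (1-e') * (1-e') = 1-e' := by
    rw [sub_mul, one_mul, mul_sub, mul_one, he'e', sub_self, sub_zero]
  set M : Submodule Rᵐᵒᵖ R := LinearMap.range (lmulOp e) with hM
  set A : Submodule Rᵐᵒᵖ R := LinearMap.range (lmulOp (1-e)) with hA
  set M' : Submodule Rᵐᵒᵖ R := LinearMap.range (lmulOp e') with hM'
  set A' : Submodule Rᵐᵒᵖ R := LinearMap.range (lmulOp (1-e')) with hA'
  have E1 : R ≃ₗ[Rᵐᵒᵖ] (↥M × ↥A) := idemSplit e hee
  have E2 : R ≃ₗ[Rᵐᵒᵖ] (↥M' × ↥A') := idemSplit e' he'e'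
  -- M ≃ M' via left mult by x / y
  have hxmem : ∀ m : R, m ∈ M → x * m ∈ M' := by
    rintro m ⟨z, rfl⟩
    exact ⟨x * z, by simp [← mul_assoc, he'x, hxe]⟩
  have hymem : ∀ m : R, m ∈ M' → y * m ∈ M := by
    rintro m ⟨z, rfl⟩
    exact ⟨y * z, by simp [← mul_assoc, hey, hye']⟩
  have EM : ↥M ≃ₗ[Rᵐᵒᵖ] ↥M' :=
  { toFun := fun m => ⟨x * m.1, hxmem m.1 m.2⟩
    invFun := fun m => ⟨y * m.1, hymem m.1 m.2⟩
    left_inv := by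
      rintro ⟨m, z, rfl⟩
      refine Subtype.ext ?_
      simp only [lmulOp_apply, ← mul_assoc, hyx, hee]
    right_inv := by
      rintro ⟨m, z, rfl⟩
      refine Subtype.ext ?_
      simp only [lmulOp_apply, ← mul_assoc, hxy, he'e']
    map_add' := fun m₁ m₂ => Subtype.ext (by simp [mul_add])
    map_smul' := fun c m => Subtype.ext (by
      simp [MulOpposite.smul_eq_mul_unop, mul_assoc]) }
  -- cancellation
  have Ebig : (↥M' × ↥A) ≃ₗ[Rᵐᵒᵖ] (↥M' × ↥A') :=
    (LinearEquiv.prodCongr EM.symm (LinearEquiv.refl _ _)).trans (E1.symm.trans E2)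
  obtain ⟨ψ⟩ := my_cancel Ebig
  -- extract w, z
  have hv0 : (1-e) ∈ A := ⟨1, by simp⟩
  have hw0 : (1-e') ∈ A' := ⟨1, by simp⟩
  set v0 : ↥A := ⟨1-e, hv0⟩ with hv0d
  set w0 : ↥A' := ⟨1-e', hw0⟩ with hw0d
  set w : R := (ψ v0).1 with hwd
  set z : R := (ψ.symm w0).1 with hzd
  -- smul facts
  have hsmulA : ∀ (c : R) (v : ↥A), ((MulOpposite.op c) • v).1 = v.1 * c := fun c v => rfl
  have hsmulA' : ∀ (c : R) (v : ↥A'), ((MulOpposite.op c) • v).1 = v.1 * c := fun c v => rfl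
  have hψ : ∀ (c : R), w * c = (ψ ((MulOpposite.op c) • v0)).1 := by
    intro c
    rw [map_smul]
    rfl
  have hψs : ∀ (c : R), z * c = (ψ.symm ((MulOpposite.op c) • w0)).1 := by
    intro c
    rw [map_smul]
    rfl
  have hwγ : w * γ = 0 := by
    have h0 : (MulOpposite.op γ) • v0 = 0 := by
      refine Subtype.ext ?_
      show (1-e) * γ = 0
      rw [sub_mul, one_mul, heγ, sub_self]
    rw [hψ, h0, map_zero]; rfl
  have hwe : w * e = 0 := by
    have h0 : (MulOpposite.op e) • v0 = 0 := by
      refine Subtype.ext ?_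
      show (1-e) * e = 0
      rw [sub_mul, one_mul, hee, sub_self]
    rw [hψ, h0, map_zero]; rfl
  have hze' : z * e' = 0 := by
    have h0 : (MulOpposite.op e') • w0 = 0 := by
      refine Subtype.ext ?_
      show (1-e') * e' = 0
      rw [sub_mul, one_mul, he'e', sub_self]
    rw [hψs, h0, map_zero]; rfl
  have hz1e : (1-e) * z = z := by
    obtain ⟨s, hs⟩ := (ψ.symm w0).2
    simp only [lmulOp_apply] at hs
    rw [hzd, ← hs, ← mul_assoc, hff]
  have hw1e' : (1-e') * w = w := by
    obtain ⟨s, hs⟩ := (ψ v0).2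
    simp only [lmulOp_apply] at hs
    rw [hwd, ← hs, ← mul_assoc, hff']
  have hwz : w * z = 1 - e' := by
    have h0 : (MulOpposite.op z) • v0 = ψ.symm w0 := by
      refine Subtype.ext ?_
      show (1-e) * z = (ψ.symm w0).1
      rw [hz1e]
    have := hψ z
    rw [h0, LinearEquiv.apply_symm_apply] at this
    exact this
  have hzw : z * w = 1 - e := by
    have h0 : (MulOpposite.op w) • w0 = ψ v0 := by
      refine Subtype.ext ?_
      show (1-e') * w = (ψ v0).1
      rw [hw1e']
    have := hψs w
    rw [h0, LinearEquiv.symm_apply_apply] at this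
    exact this
  -- w ∈ A' gives e' * w = 0 ; z ∈ A gives e * z = 0? not needed; need e'*w=0, z*e'... 
  have he'w : e' * w = 0 := by
    obtain ⟨s, hs⟩ := (ψ v0).2
    simp only [lmulOp_apply] at hs
    rw [hwd, ← hs, ← mul_assoc, mul_sub, mul_one, he'e', sub_self, zero_mul]
  -- the unit
  refine ⟨⟨x + w, y + z, ?_, ?_⟩, ?_⟩
  · -- (x+w)*(y+z) = 1
    have hxz : x * z = 0 := by
      rw [← hz1e, ← mul_assoc, mul_sub, mul_one, hxe, sub_self, zero_mul]
    have hwy : w * y = 0 := by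
      rw [← hey, ← mul_assoc, hwe, zero_mul]
    show (x + w) * (y + z) = 1
    rw [add_mul, mul_add, mul_add, hxy, hxz, hwy, hwz]
    noncomm_ring
  · -- (y+z)*(x+w) = 1
    have hyw : y * w = 0 := by
      rw [← hye', mul_assoc, he'w, mul_zero]
    have hzx : z * x = 0 := by
      rw [← he'x, ← mul_assoc, hze', zero_mul]
    show (y + z) * (x + w) = 1
    rw [add_mul, mul_add, mul_add, hyx, hyw, hzx, hzw]
    noncomm_ring
  · show (x + w) * γ = r
    rw [add_mul, hxγ, hwγ, add_zero]

end Stage2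

section T
variable {R : Type u} [Ring R]
theorem my_unit_factor [Finite R] (a b γ r : R) (h1 : a * γ = r) (h2 : b * r = γ) :
    ∃ u : Rˣ, (u : R) * γ = r := by
  obtain ⟨t, ht⟩ : ∃ t : R, t = b * a := ⟨_, rfl⟩
  obtain ⟨s, hs⟩ : ∃ s : R, s = a * b := ⟨_, rfl⟩
  have htγ : t * γ = γ := by rw [ht, mul_assoc, h1, h2]
  have hsr : s * r = r := by rw [hs, mul_assoc, h2, h1]
  have F5 : ∀ n : ℕ, s ^ n * a = a * t ^ n := fun n => by
    rw [hs, ht]; exact my_pow_mul_comm a b n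
  -- common idempotent exponent
  obtain ⟨K₁, hK₁⟩ := my_pow_idem t
  obtain ⟨K₂, hK₂⟩ := my_pow_idem s
  obtain ⟨K, hKt, hKs⟩ : ∃ K : ℕ, t^(K+1) * t^(K+1) = t^(K+1) ∧ s^(K+1) * s^(K+1) = s^(K+1) := by
    have hpos : 0 < (K₁+1) * (K₂+1) := Nat.mul_pos (Nat.succ_pos _) (Nat.succ_pos _)
    refine ⟨(K₁+1) * (K₂+1) - 1, ?_, ?_⟩
    · have hKe : (K₁+1) * (K₂+1) - 1 + 1 = (K₂+1) * (K₁+1) := by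
        rw [Nat.sub_add_cancel hpos, Nat.mul_comm]
      rw [hKe, my_pow_idem_mult t K₁ hK₁ (K₂+1) (by omega), hK₁]
    · have hKe : (K₁+1) * (K₂+1) - 1 + 1 = (K₁+1) * (K₂+1) := Nat.sub_add_cancel hpos
      rw [hKe, my_pow_idem_mult s K₂ hK₂ (K₁+1) (by omega), hK₂]
  have Ft : t^(K+1) * γ = γ := my_pow_fix t γ htγ (K+1)
  have Fs : s^(K+1) * r = r := my_pow_fix s r hsr (K+1)
  -- the system
  refine my_unit_of_system (t^(K+1)) (s^(K+1))
    (s^(K+1) * (a * t^(K+1))) (t^(K+1) * (t^K * (b * s^(K+1)))) γ r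
    hKt hKs ?_ ?_ ?_ ?_ ?_ ?_ Ft ?_
  · -- X * Y = s^(K+1)
    simp only [mul_assoc]
    rw [← mul_assoc (t^(K+1)) (t^(K+1)), hKt]
    rw [← mul_assoc (t^(K+1)) (t^K), ← pow_add]
    rw [← mul_assoc a (t^(K+1+K)), ← F5 (K+1+K)]
    rw [mul_assoc (s^(K+1+K)) a, ← mul_assoc a b, ← hs]
    rw [← pow_succ']
    rw [← pow_add, ← pow_add]
    have hexp : K+1+(K+1+K+(K+1+1)) = 4 * (K+1) := by ring
    rw [hexp, my_pow_idem_mult s K hKs 4 (by omega)]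
  · -- Y * X = t^(K+1)
    simp only [mul_assoc]
    rw [← mul_assoc (s^(K+1)) (s^(K+1)), hKs]
    rw [← mul_assoc (s^(K+1)) a, F5 (K+1)]
    rw [mul_assoc a (t^(K+1)), hKt]
    rw [← mul_assoc b a, ← ht]
    rw [← mul_assoc (t^K) t, ← pow_succ]
    rw [hKt, hKt]
  · -- X * e = X
    simp only [mul_assoc]
    rw [hKt]
  · -- e' * X = X
    simp only [← mul_assoc]
    rw [hKs]
  · -- e * Y = Y
    simp only [← mul_assoc]
    rw [hKt]
  · -- Y * e' = Y
    simp only [mul_assoc]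
    rw [hKs]
  · -- X * γ = r
    simp only [mul_assoc]
    rw [Ft, h1, Fs]

end T


/-- Let `R` be a finite ring, `P` a left multiplicative property on `Rⁿ`, `Γ` a set of
generators of the nonzero principal left ideals of `R`, and `C` a left submodule of
`Rⁿ` all of whose nonzero elements satisfy `P`.  If `P(γx + c)` holds for all `γ ∈ Γ`
and `c ∈ C`, then `P(rx + c)` holds for all nonzero `r ∈ R` and all `c ∈ C`. -/
theorem gamma_sufficient {R : Type*} [Ring R] [Finite R] (n : ℕ)
    (P : (Fin n → R) → Bool)
    (hP : ∀ (u : Rˣ) (x : Fin n → R), P ((u : R) • x) = P x)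
    (Γ : Set R)
    (hΓ : ∀ r : R, r ≠ 0 → ∃ γ ∈ Γ, Ideal.span {r} = Ideal.span {γ})
    (C : Submodule R (Fin n → R))
    (hC : ∀ c ∈ C, c ≠ 0 → P c = true)
    (x : Fin n → R)
    (hx : ∀ γ ∈ Γ, ∀ c ∈ C, P (γ • x + c) = true) :
    ∀ r : R, r ≠ 0 → ∀ c ∈ C, P (r • x + c) = true := by
  intro r hr c hc
  obtain ⟨γ, hγΓ, hspan⟩ := hΓ r hr
  have hrmem : r ∈ Ideal.span ({γ} : Set R) := by
    rw [← hspan]; exact Submodule.mem_span_singleton_self r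
  have hγmem : γ ∈ Ideal.span ({r} : Set R) := by
    rw [hspan]; exact Submodule.mem_span_singleton_self γ
  obtain ⟨a, ha⟩ := Submodule.mem_span_singleton.mp hrmem
  obtain ⟨b, hb⟩ := Submodule.mem_span_singleton.mp hγmem
  rw [smul_eq_mul] at ha hb
  obtain ⟨u, hu⟩ := my_unit_factor a b γ r ha hb
  have key : (u : R) • (γ • x + ((u⁻¹ : Rˣ) : R) • c) = r • x + c := by
    rw [smul_add, smul_smul, smul_smul, hu, ← Units.val_mul, mul_inv_cancel, Units.val_one,
      one_smul]
  rw [← key, hP]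
  exact hx γ hγΓ _ (C.smul_mem _ hc)
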